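/- arXiv:2203.16523 — 3 statements merged into one kernel-verified Lean document; each statement's English description precedes it below -/
import Mathlib

section
/- The partial derivatives of the Lucas polynomial U_n(w,t) of the first kind satisfy (w^2-4t)·∂U_n/∂t = -((n-1)·V_{n-1}(w,t) - w·U_{n-1}(w,t)) and (w^2-4t)·∂U_n/∂w = n·V_n(w,t) - w·U_n(w,t), for all n ≥ 1. -/
/-- Lucas polynomial sequence of the first kind:
`U 0 = 0`, `U 1 = 1`, `U n = w * U (n-1) - t * U (n-2)`. -/
def lucasU {R : Type*} [CommRing R] (w t : R) : ℕ → R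
  | 0 => 0
  | 1 => 1
  | n + 2 => w * lucasU w t (n + 1) - t * lucasU w t n

/-- Lucas polynomial sequence of the second kind:
`V 0 = 2`, `V 1 = w`, `V n = w * V (n-1) - t * V (n-2)`. -/
def lucasV {R : Type*} [CommRing R] (w t : R) : ℕ → R
  | 0 => 2
  | 1 => w
  | n + 2 => w * lucasV w t (n + 1) - t * lucasV w t n

lemma disc_mul_lucasU (w t : ℝ) : ∀ n,
    (w ^ 2 - 4 * t) * lucasU w t n = 2 * lucasV w t (n + 1) - w * lucasV w t n := by
  intro n
  induction n using Nat.twoStepInduction with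
  | zero => simp [lucasU, lucasV]; ring
  | one => simp [lucasU, lucasV]; ring
  | more n ih0 ih1 =>
    have ih1' : (w ^ 2 - 4 * t) * lucasU w t (n + 1)
        = 2 * lucasV w t (n + 2) - w * lucasV w t (n + 1) := ih1
    show (w ^ 2 - 4 * t) * lucasU w t (n + 2) = 2 * lucasV w t (n + 3) - w * lucasV w t (n + 2)
    have e3 : lucasV w t (n + 3) = w * lucasV w t (n + 2) - t * lucasV w t (n + 1) := rfl
    have eu : lucasU w t (n + 2) = w * lucasU w t (n + 1) - t * lucasU w t n := rfl
    have e2 : lucasV w t (n + 2) = w * lucasV w t (n + 1) - t * lucasV w t n := rfl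
    rw [e2] at ih1'
    rw [eu, e3, e2]
    linear_combination w * ih1' - t * ih0

lemma lucasU_key (w t : ℝ) : ∀ n : ℕ, ∃ a b : ℝ,
    HasDerivAt (fun s : ℝ => lucasU w s (n + 1)) a t ∧
    HasDerivAt (fun v : ℝ => lucasU v t (n + 1)) b w ∧
    (w ^ 2 - 4 * t) * a = -((n : ℝ) * lucasV w t n - w * lucasU w t n) ∧
    (w ^ 2 - 4 * t) * b = ((n : ℝ) + 1) * lucasV w t (n + 1) - w * lucasU w t (n + 1) := by
  intro n
  induction n using Nat.twoStepInduction with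
  | zero =>
    refine ⟨0, 0, ?_, ?_, ?_, ?_⟩
    · exact hasDerivAt_const t 1
    · exact hasDerivAt_const w 1
    · simp [lucasU, lucasV]
    · simp [lucasU, lucasV]
  | one =>
    have hf : ∀ s : ℝ, lucasU w s (1 + 1) = w * 1 - s * 0 := fun _ => rfl
    have hg : ∀ v : ℝ, lucasU v t (1 + 1) = v * 1 - t * 0 := fun _ => rfl
    have hV1 : lucasV w t 1 = w := rfl
    have hU1 : lucasU w t 1 = 1 := rfl
    have hV2 : lucasV w t (1 + 1) = w * w - t * 2 := rfl
    have hU2 : lucasU w t (1 + 1) = w * 1 - t * 0 := rfl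
    refine ⟨0, 1, ?_, ?_, ?_, ?_⟩
    · simp only [hf, mul_one, mul_zero, sub_zero]
      exact hasDerivAt_const t w
    · simp only [hg, mul_one, mul_zero, sub_zero]
      exact hasDerivAt_id w
    · rw [hV1, hU1]; push_cast; ring
    · rw [hV2, hU2]; push_cast; ring
  | more n ih0 ih1 =>
    obtain ⟨a0, b0, ht0, hw0, ca0, cb0⟩ := ih0
    obtain ⟨a1, b1, ht1, hw1, ca1, cb1⟩ := ih1
    have ht2 : HasDerivAt (fun s : ℝ => lucasU w s (n + 3))
        (w * a1 - (1 * lucasU w t (n + 1) + t * a0)) t :=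
      (ht1.const_mul w).sub ((hasDerivAt_id t).mul ht0)
    have hw2 : HasDerivAt (fun v : ℝ => lucasU v t (n + 3))
        ((1 * lucasU w t (n + 2) + w * b1) - t * b0) w :=
      ((hasDerivAt_id w).mul hw1).sub (hw0.const_mul t)
    refine ⟨_, _, ht2, hw2, ?_, ?_⟩
    · have dU : (w ^ 2 - 4 * t) * lucasU w t (n + 1)
          = 2 * lucasV w t (n + 2) - w * lucasV w t (n + 1) := disc_mul_lucasU w t (n + 1)
      have eV : lucasV w t (n + 2) = w * lucasV w t (n + 1) - t * lucasV w t n := rfl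
      have eU : lucasU w t (n + 2) = w * lucasU w t (n + 1) - t * lucasU w t n := rfl
      push_cast at ca1 ⊢
      linear_combination w * ca1 - t * ca0 - dU + (n : ℝ) * eV - w * eU
    · have dU : (w ^ 2 - 4 * t) * lucasU w t (n + 2)
          = 2 * lucasV w t (n + 3) - w * lucasV w t (n + 2) := disc_mul_lucasU w t (n + 2)
      have eV : lucasV w t (n + 3) = w * lucasV w t (n + 2) - t * lucasV w t (n + 1) := rfl
      have eU : lucasU w t (n + 3) = w * lucasU w t (n + 2) - t * lucasU w t (n + 1) := rfl
      push_cast at cb1 ⊢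
      linear_combination w * cb1 - t * cb0 + dU - ((n : ℝ) + 1) * eV + w * eU

/-- Partial derivatives of the Lucas polynomial of the first kind:
`(w^2-4t) * ∂U_n/∂t = -((n-1) V_{n-1} - w U_{n-1})` and
`(w^2-4t) * ∂U_n/∂w = n V_n - w U_n` for all `n ≥ 1`. -/
theorem lucasU_deriv (w t : ℝ) (n : ℕ) (hn : 1 ≤ n) :
    (w ^ 2 - 4 * t) * deriv (fun s : ℝ => lucasU w s n) t
        = -(((n : ℝ) - 1) * lucasV w t (n - 1) - w * lucasU w t (n - 1)) ∧
    (w ^ 2 - 4 * t) * deriv (fun v : ℝ => lucasU v t n) w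
        = (n : ℝ) * lucasV w t n - w * lucasU w t n := by
  obtain ⟨m, rfl⟩ : ∃ m, n = m + 1 := ⟨n - 1, by omega⟩
  obtain ⟨a, b, ht, hw, ca, cb⟩ := lucasU_key w t m
  rw [ht.deriv, hw.deriv]
  constructor
  · simpa using ca
  · push_cast at cb ⊢; linarith [cb]
end

section
/- For an integer r ≥ 2 and integers a, b with 0 ≤ a, b ≤ r-2, the signed trigonometric identity Σ_{j=1}^{r-1} (-1)^j · sin((a+1)jπ/r) · sin((b+1)jπ/r) = -(r/2)·δ_{a+b, r-2} holds. -/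
open Real Finset

lemma cos_geom_sum (t : ℤ) (r : ℕ) (ht : ¬ (r : ℤ) ∣ t) :
    ∑ j ∈ Finset.range r, Real.cos (2 * π * t * j / r) = 0 := by
  rcases Nat.eq_zero_or_pos r with hr0 | hr
  · simp [hr0]
  have hrC : (r : ℂ) ≠ 0 := Nat.cast_ne_zero.mpr hr.ne'
  have hπ : (π : ℂ) ≠ 0 := Complex.ofReal_ne_zero.mpr Real.pi_ne_zero
  set ω : ℂ := Complex.exp (2 * π * Complex.I * t / r) with hω
  have hω1 : ω ≠ 1 := by
    rw [hω, Ne, Complex.exp_eq_one_iff]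
    rintro ⟨n, hn⟩
    apply ht ⟨n, ?_⟩
    have : (t : ℂ) = r * n := by
      field_simp at hn
      have h2 : (2 : ℂ) * (π : ℂ) * Complex.I ≠ 0 := by
        simp [hπ, Complex.I_ne_zero]
      apply mul_left_cancel₀ h2
      linear_combination (2 * (π : ℂ) * Complex.I) * hn
    exact_mod_cast this
  have hωr : ω ^ r = 1 := by
    rw [hω, ← Complex.exp_nat_mul]
    have : (r : ℂ) * (2 * π * Complex.I * t / r) = t * (2 * π * Complex.I) := by
      field_simp
    rw [this, Complex.exp_int_mul_two_pi_mul_I]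
  have hsum : ∑ j ∈ Finset.range r, ω ^ j = 0 := by
    rw [geom_sum_eq hω1, hωr, sub_self, zero_div]
  have hterm : ∀ j : ℕ, ω ^ j = Complex.exp (((2 * π * t * j / r : ℝ) : ℂ) * Complex.I) := by
    intro j
    rw [hω, ← Complex.exp_nat_mul]
    congr 1
    push_cast
    field_simp
  calc ∑ j ∈ Finset.range r, Real.cos (2 * π * t * j / r)
      = (∑ j ∈ Finset.range r, ω ^ j).re := by
        rw [Complex.re_sum]
        refine Finset.sum_congr rfl fun j _ => ?_
        rw [hterm j, Complex.exp_ofReal_mul_I_re]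
    _ = 0 := by rw [hsum]; rfl

lemma cos_odd_sum (k : ℤ) (hk : Odd k) (r : ℕ) :
    ∑ j ∈ Finset.Icc 1 (r - 1), Real.cos (k * j * π / r) = 0 := by
  set f : ℕ → ℝ := fun j => Real.cos (k * j * π / r) with hf
  have h1 : ∑ j ∈ Finset.Icc 1 (r - 1), f j = ∑ i ∈ Finset.range (r - 1), f (i + 1) := by
    rw [show Finset.Icc 1 (r - 1) = Finset.Ico 1 ((r - 1) + 1) from by rw [Finset.Ico_add_one_right_eq_Icc],
      Finset.sum_Ico_eq_sum_range]
    simp [add_comm]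
  have h2 : ∑ i ∈ Finset.range (r - 1), f (i + 1)
      = ∑ i ∈ Finset.range (r - 1), f ((r - 1) - 1 - i + 1) :=
    (Finset.sum_range_reflect (fun i => f (i + 1)) (r - 1)).symm
  have h3 : ∀ i ∈ Finset.range (r - 1), f ((r - 1) - 1 - i + 1) = - f (i + 1) := by
    intro i hi
    rw [Finset.mem_range] at hi
    have hir : i + 1 ≤ r := by omega
    have hr2 : 2 ≤ r := by omega
    have hcast : (((r - 1) - 1 - i + 1 : ℕ) : ℝ) = (r : ℝ) - (i + 1) := by
      have : (r - 1) - 1 - i + 1 = r - (i + 1) := by omega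
      rw [this]
      push_cast [hir]
      ring
    have hrpos : (0:ℝ) < r := by
      have : 0 < r := by omega
      exact_mod_cast this
    have harg : (k : ℝ) * (((r - 1) - 1 - i + 1 : ℕ) : ℝ) * π / r
        = (k : ℝ) * π - k * (i + 1) * π / r := by
      rw [hcast]
      field_simp
    rw [hf]
    simp only
    rw [harg, Real.cos_int_mul_pi_sub, Odd.neg_one_zpow hk]
    push_cast
    ring
  have h4 := Finset.sum_congr rfl h3
  have h5 : ∑ i ∈ Finset.range (r - 1), f (i + 1)
      = - ∑ i ∈ Finset.range (r - 1), f (i + 1) := by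
    conv_lhs => rw [h2, h4]
    rw [Finset.sum_neg_distrib]
  rw [h1]
  linarith
lemma cos_even_sum (t : ℤ) (r : ℕ) (hr : 0 < r) (ht : ¬ (r : ℤ) ∣ t) :
    ∑ j ∈ Finset.Icc 1 (r - 1), Real.cos ((2 * t : ℤ) * j * π / r) = -1 := by
  have h0 := cos_geom_sum t r ht
  have hIcc : Finset.Icc 1 (r - 1) = Finset.Ico 1 r := by
    rw [← Finset.Ico_add_one_right_eq_Icc]
    congr 1
    omega
  have hsplit : ∑ j ∈ Finset.range r, Real.cos (2 * π * t * j / r)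
      = Real.cos (2 * π * t * 0 / r) + ∑ j ∈ Finset.Ico 1 r, Real.cos (2 * π * t * j / r) := by
    rw [Finset.range_eq_Ico, Finset.sum_eq_sum_Ico_succ_bot hr]
    norm_num
  have hterm : ∀ j : ℕ, Real.cos (2 * π * t * j / r) = Real.cos ((2 * t : ℤ) * j * π / r) := by
    intro j; congr 1; push_cast; ring
  rw [hIcc]
  have : ∑ j ∈ Finset.Ico 1 r, Real.cos ((2 * t : ℤ) * j * π / r)
      = ∑ j ∈ Finset.Ico 1 r, Real.cos (2 * π * t * j / r) :=
    Finset.sum_congr rfl fun j _ => (hterm j).symm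
  rw [this]
  have hc0 : Real.cos (2 * π * t * 0 / r) = 1 := by norm_num
  rw [h0, hc0] at hsplit
  linarith

lemma sin_orth (r m n : ℕ) (hm1 : 1 ≤ m) (hm : m ≤ r - 1) (hn1 : 1 ≤ n) (hn : n ≤ r - 1) :
    ∑ j ∈ Finset.Icc 1 (r - 1), Real.sin (m * j * π / r) * Real.sin (n * j * π / r)
      = (r / 2 : ℝ) * (if m = n then 1 else 0) := by
  have hr2 : 2 ≤ r := by omega
  have hrpos : (0 : ℕ) < r := by omega
  have hpoint : ∀ j ∈ Finset.Icc 1 (r - 1),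
      Real.sin (m * j * π / r) * Real.sin (n * j * π / r)
      = (Real.cos (((m : ℤ) - n : ℤ) * j * π / r)
         - Real.cos (((m : ℤ) + n : ℤ) * j * π / r)) / 2 := by
    intro j _
    have e1 : (((m : ℤ) - n : ℤ) : ℝ) * j * π / r
        = (m : ℝ) * j * π / r - (n : ℝ) * j * π / r := by push_cast; ring
    have e2 : (((m : ℤ) + n : ℤ) : ℝ) * j * π / r
        = (m : ℝ) * j * π / r + (n : ℝ) * j * π / r := by push_cast; ring
    rw [e1, e2, Real.cos_sub, Real.cos_add]
    ring
  rw [Finset.sum_congr rfl hpoint]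
  have hsplit : ∑ j ∈ Finset.Icc 1 (r - 1),
      (Real.cos (((m : ℤ) - n : ℤ) * j * π / r)
       - Real.cos (((m : ℤ) + n : ℤ) * j * π / r)) / 2
      = ((∑ j ∈ Finset.Icc 1 (r - 1), Real.cos (((m : ℤ) - n : ℤ) * j * π / r))
         - ∑ j ∈ Finset.Icc 1 (r - 1), Real.cos (((m : ℤ) + n : ℤ) * j * π / r)) / 2 := by
    rw [← Finset.sum_sub_distrib, ← Finset.sum_div]
  rw [hsplit]
  have hnotdvd : ∀ s : ℤ, s ≠ 0 → -(r:ℤ) < s → s < r → ¬ (r : ℤ) ∣ s := by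
    rintro s hs0 hlb hub ⟨c, rfl⟩
    rcases lt_trichotomy c 0 with hc | hc | hc
    · nlinarith [mul_le_mul_of_nonneg_left (show c ≤ -1 by omega) (show (0:ℤ) ≤ r by omega)]
    · simp [hc] at hs0
    · nlinarith [mul_le_mul_of_nonneg_left (show 1 ≤ c by omega) (show (0:ℤ) ≤ r by omega)]
  by_cases hmn : m = n
  · subst hmn
    rw [if_pos rfl]
    have hzero : ∑ j ∈ Finset.Icc 1 (r - 1), Real.cos (((m : ℤ) - m : ℤ) * j * π / r)
        = (r : ℝ) - 1 := by
      have : ∀ j ∈ Finset.Icc 1 (r - 1),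
          Real.cos (((m : ℤ) - m : ℤ) * j * π / r) = 1 := by
        intro j _; simp
      rw [Finset.sum_congr rfl this, Finset.sum_const, Nat.card_Icc,
        show r - 1 + 1 - 1 = r - 1 from by omega, nsmul_eq_mul, mul_one]
      push_cast [show (1:ℕ) ≤ r from by omega]
      ring
    have h2m : ((m : ℤ) + m : ℤ) = 2 * m := by ring
    have hsum2 : ∑ j ∈ Finset.Icc 1 (r - 1), Real.cos (((m : ℤ) + m : ℤ) * j * π / r) = -1 := by
      rw [h2m]
      exact cos_even_sum m r hrpos (by
        intro hdvd
        have : r ∣ m := by exact_mod_cast hdvd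
        have := Nat.le_of_dvd (by omega) this
        omega)
    rw [hzero, hsum2]
    ring
  · rw [if_neg hmn]
    rcases Int.even_or_odd ((m : ℤ) - n) with ⟨t, ht⟩ | hodd
    · -- even case
      have ht2 : (m : ℤ) - n = 2 * t := by omega
      have hbounds : t ≠ 0 ∧ -(r:ℤ) < t ∧ t < r := by
        have hmn' : (m : ℤ) ≠ n := by exact_mod_cast fun h => hmn (by exact_mod_cast h)
        omega
      have hsum1 : ∑ j ∈ Finset.Icc 1 (r - 1), Real.cos (((m : ℤ) - n : ℤ) * j * π / r) = -1 := by
        rw [show ((m : ℤ) - n : ℤ) = 2 * t from ht2]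
        exact cos_even_sum t r hrpos (hnotdvd t hbounds.1 hbounds.2.1 hbounds.2.2)
      have hs : (m : ℤ) + n = 2 * (t + n) := by omega
      have hsbounds : t + n ≠ 0 ∧ -(r:ℤ) < t + n ∧ t + n < r := by omega
      have hsum2 : ∑ j ∈ Finset.Icc 1 (r - 1), Real.cos (((m : ℤ) + n : ℤ) * j * π / r) = -1 := by
        rw [show ((m : ℤ) + n : ℤ) = 2 * (t + n) from hs]
        exact cos_even_sum (t + n) r hrpos
          (hnotdvd (t + n) hsbounds.1 hsbounds.2.1 hsbounds.2.2)
      rw [hsum1, hsum2]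
      ring
    · -- odd case
      have hodd2 : Odd ((m : ℤ) + n) := by
        rcases hodd with ⟨t, ht⟩
        exact ⟨t + n, by omega⟩
      rw [cos_odd_sum _ hodd r, cos_odd_sum _ hodd2 r]
      ring

/-- Signed trigonometric identity:
`Σ_{j=1}^{r-1} (-1)^j sin((a+1)jπ/r) sin((b+1)jπ/r) = -(r/2) δ_{a+b, r-2}`
for `0 ≤ a, b ≤ r-2`. -/
theorem sin_signed_orthogonality (r a b : ℕ) (hr : 2 ≤ r) (ha : a ≤ r - 2) (hb : b ≤ r - 2) :
    ∑ j ∈ Finset.Icc 1 (r - 1),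
        (-1 : ℝ) ^ j * Real.sin ((a + 1) * j * π / r) * Real.sin ((b + 1) * j * π / r)
      = -(r / 2 : ℝ) * (if a + b = r - 2 then 1 else 0) := by
  set m := r - 1 - a with hmdef
  set n := b + 1 with hndef
  have hm1 : 1 ≤ m := by omega
  have hmle : m ≤ r - 1 := by omega
  have hn1 : 1 ≤ n := by omega
  have hnle : n ≤ r - 1 := by omega
  have hrR : (r : ℝ) ≠ 0 := Nat.cast_ne_zero.mpr (by omega)
  have hpoint : ∀ j ∈ Finset.Icc 1 (r - 1),
      (-1 : ℝ) ^ j * Real.sin ((a + 1) * j * π / r) * Real.sin ((b + 1) * j * π / r)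
      = -(Real.sin (m * j * π / r) * Real.sin (n * j * π / r)) := by
    intro j hj
    have hcastm : ((m : ℕ) : ℝ) = (r : ℝ) - ((a : ℝ) + 1) := by
      have h' : (m : ℕ) = r - (a + 1) := by omega
      rw [h']
      push_cast [show a + 1 ≤ r from by omega]
      ring
    have harg : (m : ℝ) * j * π / r = ((j : ℤ) : ℝ) * π - ((a : ℝ) + 1) * j * π / r := by
      rw [hcastm]
      push_cast
      field_simp
    have hsin : Real.sin ((m : ℝ) * j * π / r)
        = -((-1 : ℝ) ^ j * Real.sin (((a : ℝ) + 1) * j * π / r)) := by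
      rw [harg, Real.sin_int_mul_pi_sub, zpow_natCast]
    have hcastn : ((n : ℕ) : ℝ) = (b : ℝ) + 1 := by
      rw [hndef]; push_cast; ring
    rw [hsin, hcastn]
    ring
  rw [Finset.sum_congr rfl hpoint, Finset.sum_neg_distrib,
    sin_orth r m n hm1 hmle hn1 hnle]
  by_cases h : a + b = r - 2
  · rw [if_pos h, if_pos (show m = n by omega)]
    ring
  · rw [if_neg h, if_neg (show m ≠ n by omega)]
    ring
end

section
/- Let r ≥ 3, 0 ≤ a ≤ r-2. The bivariate polynomial identity holds: ∂²U_{a+1}/∂t² + (2/r)·(∂U_{a+1}/∂t)(∂V_r/∂t) + (1/r)·U_{a+1}·(∂²V_r/∂t²) + (1/r²)·U_{a+1}·(∂V_r/∂t)² - t^{r-2}·U_{a+1} - (a/t)·∂U_{a+1}/∂t - (a/(tr))·U_{a+1}·∂V_r/∂t = ∂/∂w[ U_{a+1}·U_{r-2} + (1/t)·∂U_{a+1}/∂w ] + (1/r)·(∂V_r/∂w)·( U_{a+1}·U_{r-2} + (1/t)·∂U_{a+1}/∂w ), as an identity of rational functions in (w,t). -/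
def uT (w t : ℝ) : ℕ → ℝ
  | 0 => 0
  | 1 => 0
  | n + 2 => w * uT w t (n + 1) - lucasU w t n - t * uT w t n

def uTT (w t : ℝ) : ℕ → ℝ
  | 0 => 0
  | 1 => 0
  | n + 2 => w * uTT w t (n + 1) - 2 * uT w t n - t * uTT w t n

def uW (w t : ℝ) : ℕ → ℝ
  | 0 => 0
  | 1 => 0
  | n + 2 => lucasU w t (n + 1) + w * uW w t (n + 1) - t * uW w t n

def uWW (w t : ℝ) : ℕ → ℝ
  | 0 => 0
  | 1 => 0
  | n + 2 => 2 * uW w t (n + 1) + w * uWW w t (n + 1) - t * uWW w t n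

def vT (w t : ℝ) : ℕ → ℝ
  | 0 => 0
  | 1 => 0
  | n + 2 => w * vT w t (n + 1) - lucasV w t n - t * vT w t n

def vTT (w t : ℝ) : ℕ → ℝ
  | 0 => 0
  | 1 => 0
  | n + 2 => w * vTT w t (n + 1) - 2 * vT w t n - t * vTT w t n

def vW (w t : ℝ) : ℕ → ℝ
  | 0 => 0
  | 1 => 1
  | n + 2 => lucasV w t (n + 1) + w * vW w t (n + 1) - t * vW w t n

lemma uW_eq_neg_uT (w t : ℝ) : ∀ n, uW w t n = - uT w t (n+1) := by
  intro n
  induction n using Nat.twoStepInduction with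
  | zero => simp [uW, uT]
  | one => simp [uW, uT, lucasU]
  | more n ih0 ih1 =>
    show lucasU w t (n+1) + w * uW w t (n+1) - t * uW w t n
        = -(w * uT w t (n+2) - lucasU w t (n+1) - t * uT w t (n+1))
    linear_combination w * ih1 - t * ih0

lemma A2 (w t : ℝ) : ∀ n, w * uT w t (n+1) + 2 * uW w t (n+1) = ((n : ℝ)+1) * lucasU w t n := by
  intro n
  induction n using Nat.twoStepInduction with
  | zero => simp [uW, uT, lucasU]
  | one => simp [uW, uT, lucasU]; ring
  | more n ih0 ih1 =>
    have e1 : uT w t (n+3) = w * uT w t (n+2) - lucasU w t (n+1) - t * uT w t (n+1) := rfl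
    have e2 : uW w t (n+3) = lucasU w t (n+2) + w * uW w t (n+2) - t * uW w t (n+1) := rfl
    have e3 : lucasU w t (n+2) = w * lucasU w t (n+1) - t * lucasU w t n := rfl
    push_cast at ih1 ⊢
    rw [e1, e2]
    linear_combination w * ih1 - t * ih0 - ((n:ℝ)+1) * e3

lemma catalanU (w t : ℝ) : ∀ n, lucasU w t (n+1)^2 - lucasU w t (n+2) * lucasU w t n = t^n := by
  intro n
  induction n with
  | zero => simp [lucasU]
  | succ n ih =>
    have e1 : lucasU w t (n+3) = w * lucasU w t (n+2) - t * lucasU w t (n+1) := rfl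
    have e2 : lucasU w t (n+2) = w * lucasU w t (n+1) - t * lucasU w t n := rfl
    linear_combination t * ih - lucasU w t (n+1) * e1 + lucasU w t (n+2) * e2

lemma V_eq_U (w t : ℝ) : ∀ n, lucasV w t (n+1) = w * lucasU w t (n+1) - 2*t*lucasU w t n := by
  intro n
  induction n using Nat.twoStepInduction with
  | zero => simp [lucasV, lucasU]
  | one => simp [lucasV, lucasU]; ring
  | more n ih0 ih1 =>
    have e1 : lucasV w t (n+3) = w * lucasV w t (n+2) - t * lucasV w t (n+1) := rfl
    have e2 : lucasU w t (n+3) = w * lucasU w t (n+2) - t * lucasU w t (n+1) := rfl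
    have e3 : lucasU w t (n+2) = w * lucasU w t (n+1) - t * lucasU w t n := rfl
    rw [e1]
    linear_combination w * ih1 - t * ih0 - w * e2 + 2*t*e3

lemma vW_eq (w t : ℝ) : ∀ n, vW w t n = (n : ℝ) * lucasU w t n := by
  intro n
  induction n using Nat.twoStepInduction with
  | zero => simp [vW, lucasU]
  | one => simp [vW, lucasU]
  | more n ih0 ih1 =>
    have e1 : vW w t (n+2) = lucasV w t (n+1) + w * vW w t (n+1) - t * vW w t n := rfl
    have e2 : lucasU w t (n+2) = w * lucasU w t (n+1) - t * lucasU w t n := rfl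
    have e3 := V_eq_U w t n
    push_cast at ih1 ⊢
    rw [e1]
    linear_combination w * ih1 - t * ih0 + e3 - ((n:ℝ)+2) * e2

lemma vT_eq (w t : ℝ) : ∀ n, vT w t (n+1) = -((n : ℝ)+1) * lucasU w t n := by
  intro n
  induction n using Nat.twoStepInduction with
  | zero => simp [vT, lucasU]
  | one => simp [vT, lucasV, lucasU]; norm_num
  | more n ih0 ih1 =>
    have e1 : vT w t (n+3) = w * vT w t (n+2) - lucasV w t (n+1) - t * vT w t (n+1) := rfl
    have e2 : lucasU w t (n+2) = w * lucasU w t (n+1) - t * lucasU w t n := rfl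
    have e3 := V_eq_U w t n
    push_cast at ih1 ⊢
    rw [e1]
    linear_combination w * ih1 - t * ih0 - e3 + ((n:ℝ)+3) * e2

lemma Blem (w t : ℝ) : ∀ n, w * uT w t (n+1) - 2*t*uT w t n = (1-(n:ℝ)) * lucasU w t n := by
  intro n
  induction n using Nat.twoStepInduction with
  | zero => simp [uT, lucasU]
  | one => simp [uT, lucasU]
  | more n ih0 ih1 =>
    have e1 : uT w t (n+3) = w * uT w t (n+2) - lucasU w t (n+1) - t * uT w t (n+1) := rfl
    have e2 : lucasU w t (n+2) = w * lucasU w t (n+1) - t * lucasU w t n := rfl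
    have e0 : uT w t (n+2) = w * uT w t (n+1) - lucasU w t n - t * uT w t n := rfl
    push_cast at ih1 ⊢
    rw [e1]
    linear_combination w * ih1 - t * ih0 + ((n:ℝ)+1) * e2 - 2*t*e0

lemma vTT_eq (w t : ℝ) : ∀ n, vTT w t (n+1) = -((n : ℝ)+1) * uT w t n := by
  intro n
  induction n using Nat.twoStepInduction with
  | zero => simp [vTT, uT]
  | one => simp [vTT, vT, uT, lucasU]
  | more n ih0 ih1 =>
    have e1 : vTT w t (n+3) = w * vTT w t (n+2) - 2 * vT w t (n+1) - t * vTT w t (n+1) := rfl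
    have e2 : uT w t (n+2) = w * uT w t (n+1) - lucasU w t n - t * uT w t n := rfl
    have e3 := vT_eq w t n
    have e4 := Blem w t n
    push_cast at ih1 ⊢
    rw [e1]
    linear_combination w * ih1 - t * ih0 - 2*e3 + ((n:ℝ)+3) * e2 + e4

lemma KEY0 (w t : ℝ) (s : ℕ) :
    -(t * uT w t (s+2)) + t * lucasU w t (s+2)^2 - t^(s+2)
      = t * uW w t (s+1) + lucasU w t (s+3) * (t * lucasU w t (s+1)) := by
  have hA1 := uW_eq_neg_uT w t (s+1)
  have hc := catalanU w t (s+1)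
  linear_combination t * hc - t * hA1

lemma KEY (w t : ℝ) (s : ℕ) : ∀ a : ℕ,
    t * uTT w t (a+1) - 2*t*uT w t (a+1)*lucasU w t (s+2) - t*lucasU w t (a+1)*uT w t (s+2)
      + t*lucasU w t (a+1)*lucasU w t (s+2)^2 - t^(s+2)*lucasU w t (a+1)
      - (a:ℝ)*uT w t (a+1) + (a:ℝ)*lucasU w t (a+1)*lucasU w t (s+2)
    = t*(uW w t (a+1)*lucasU w t (s+1) + lucasU w t (a+1)*uW w t (s+1)) + uWW w t (a+1)
      + lucasU w t (s+3)*(t*lucasU w t (a+1)*lucasU w t (s+1) + uW w t (a+1)) := by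
  intro a
  induction a using Nat.twoStepInduction with
  | zero =>
    have h0 := KEY0 w t s
    norm_num [show uTT w t 1 = 0 from rfl, show uT w t 1 = 0 from rfl,
      show uW w t 1 = 0 from rfl, show uWW w t 1 = 0 from rfl,
      show lucasU w t 1 = (1:ℝ) from rfl]
    linear_combination h0
  | one =>
    have h0 := KEY0 w t s
    have hU2 : lucasU w t 2 = w := by simp [lucasU]
    have hT2 : uT w t 2 = 0 := by simp [uT, lucasU]
    have hTT2 : uTT w t 2 = 0 := by simp [uTT, uT]
    have hW2 : uW w t 2 = 1 := by simp [uW, lucasU]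
    have hWW2 : uWW w t 2 = 0 := by simp [uWW, uW]
    have hr : lucasU w t (s+3) = w * lucasU w t (s+2) - t * lucasU w t (s+1) := rfl
    rw [hU2, hT2, hTT2, hW2, hWW2]
    push_cast
    linear_combination w * h0 - hr
  | more a ih0 ih1 =>
    have e1 : uTT w t (a+3) = w * uTT w t (a+2) - 2 * uT w t (a+1) - t * uTT w t (a+1) := rfl
    have e2 : uT w t (a+3) = w * uT w t (a+2) - lucasU w t (a+1) - t * uT w t (a+1) := rfl
    have e3 : lucasU w t (a+3) = w * lucasU w t (a+2) - t * lucasU w t (a+1) := rfl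
    have e4 : uW w t (a+3) = lucasU w t (a+2) + w * uW w t (a+2) - t * uW w t (a+1) := rfl
    have e5 : uWW w t (a+3) = 2 * uW w t (a+2) + w * uWW w t (a+2) - t * uWW w t (a+1) := rfl
    have hA2 := A2 w t (a+1)
    push_cast at ih0 ih1 hA2 ⊢
    have e6 : lucasU w t (s+3) = w * lucasU w t (s+2) - t * lucasU w t (s+1) := rfl
    rw [e1, e2, e3, e4, e5]
    linear_combination w * ih1 - t * ih0 - hA2 - lucasU w t (a+2) * e6

lemma hasDerivAt_U_t (w t : ℝ) : ∀ n, HasDerivAt (fun s => lucasU w s n) (uT w t n) t := by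
  intro n
  induction n using Nat.twoStepInduction with
  | zero => exact hasDerivAt_const t 0
  | one => exact hasDerivAt_const t 1
  | more n ih0 ih1 =>
    have h := (ih1.const_mul w).sub ((hasDerivAt_id t).mul ih0)
    have hv : w * uT w t (n+1) - (1 * lucasU w t n + t * uT w t n) = uT w t (n+2) := by
      show _ = w * uT w t (n+1) - lucasU w t n - t * uT w t n
      ring
    exact hv ▸ h

lemma hasDerivAt_uT_t (w t : ℝ) : ∀ n, HasDerivAt (fun s => uT w s n) (uTT w t n) t := by
  intro n
  induction n using Nat.twoStepInduction with
  | zero => exact hasDerivAt_const t 0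
  | one => exact hasDerivAt_const t 0
  | more n ih0 ih1 =>
    have h := ((ih1.const_mul w).sub (hasDerivAt_U_t w t n)).sub ((hasDerivAt_id t).mul ih0)
    have hv : w * uTT w t (n+1) - uT w t n - (1 * uT w t n + t * uTT w t n) = uTT w t (n+2) := by
      show _ = w * uTT w t (n+1) - 2 * uT w t n - t * uTT w t n
      ring
    exact hv ▸ h

lemma hasDerivAt_U_w (w t : ℝ) : ∀ n, HasDerivAt (fun v => lucasU v t n) (uW w t n) w := by
  intro n
  induction n using Nat.twoStepInduction with
  | zero => exact hasDerivAt_const w 0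
  | one => exact hasDerivAt_const w 1
  | more n ih0 ih1 =>
    have h := ((hasDerivAt_id w).mul ih1).sub (ih0.const_mul t)
    have hv : 1 * lucasU w t (n+1) + w * uW w t (n+1) - t * uW w t n = uW w t (n+2) := by
      show _ = lucasU w t (n+1) + w * uW w t (n+1) - t * uW w t n
      ring
    exact hv ▸ h

lemma hasDerivAt_uW_w (w t : ℝ) : ∀ n, HasDerivAt (fun v => uW v t n) (uWW w t n) w := by
  intro n
  induction n using Nat.twoStepInduction with
  | zero => exact hasDerivAt_const w 0
  | one => exact hasDerivAt_const w 0
  | more n ih0 ih1 =>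
    have h := ((hasDerivAt_U_w w t (n+1)).add ((hasDerivAt_id w).mul ih1)).sub (ih0.const_mul t)
    have hv : uW w t (n+1) + (1 * uW w t (n+1) + w * uWW w t (n+1)) - t * uWW w t n
        = uWW w t (n+2) := by
      show _ = 2 * uW w t (n+1) + w * uWW w t (n+1) - t * uWW w t n
      ring
    exact hv ▸ h

lemma hasDerivAt_V_t (w t : ℝ) : ∀ n, HasDerivAt (fun s => lucasV w s n) (vT w t n) t := by
  intro n
  induction n using Nat.twoStepInduction with
  | zero => exact hasDerivAt_const t 2
  | one => exact hasDerivAt_const t w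
  | more n ih0 ih1 =>
    have h := (ih1.const_mul w).sub ((hasDerivAt_id t).mul ih0)
    have hv : w * vT w t (n+1) - (1 * lucasV w t n + t * vT w t n) = vT w t (n+2) := by
      show _ = w * vT w t (n+1) - lucasV w t n - t * vT w t n
      ring
    exact hv ▸ h

lemma hasDerivAt_vT_t (w t : ℝ) : ∀ n, HasDerivAt (fun s => vT w s n) (vTT w t n) t := by
  intro n
  induction n using Nat.twoStepInduction with
  | zero => exact hasDerivAt_const t 0
  | one => exact hasDerivAt_const t 0
  | more n ih0 ih1 =>
    have h := ((ih1.const_mul w).sub (hasDerivAt_V_t w t n)).sub ((hasDerivAt_id t).mul ih0)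
    have hv : w * vTT w t (n+1) - vT w t n - (1 * vT w t n + t * vTT w t n) = vTT w t (n+2) := by
      show _ = w * vTT w t (n+1) - 2 * vT w t n - t * vTT w t n
      ring
    exact hv ▸ h

lemma hasDerivAt_V_w (w t : ℝ) : ∀ n, HasDerivAt (fun v => lucasV v t n) (vW w t n) w := by
  intro n
  induction n using Nat.twoStepInduction with
  | zero => exact hasDerivAt_const w 2
  | one => exact hasDerivAt_id w
  | more n ih0 ih1 =>
    have h := ((hasDerivAt_id w).mul ih1).sub (ih0.const_mul t)
    have hv : 1 * lucasV w t (n+1) + w * vW w t (n+1) - t * vW w t n = vW w t (n+2) := by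
      show _ = lucasV w t (n+1) + w * vW w t (n+1) - t * vW w t n
      ring
    exact hv ▸ h

/-- Algebraic core of Proposition B.1: the image of the Airy–Lucas integrand under the
operator `d²/dt² - t^(r-2) - (a/t) d/dt` is a total `w`-derivative. As an identity of
rational functions in `(w,t)` (here stated pointwise for `t ≠ 0`):
`∂²U_{a+1}/∂t² + (2/r)(∂U_{a+1}/∂t)(∂V_r/∂t) + (1/r)U_{a+1}∂²V_r/∂t²
 + (1/r²)U_{a+1}(∂V_r/∂t)² - t^(r-2)U_{a+1} - (a/t)∂U_{a+1}/∂t - (a/(tr))U_{a+1}∂V_r/∂t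
 = ∂/∂w[U_{a+1}U_{r-2} + (1/t)∂U_{a+1}/∂w]
   + (1/r)(∂V_r/∂w)(U_{a+1}U_{r-2} + (1/t)∂U_{a+1}/∂w)`. -/
theorem airy_lucas_total_derivative_identity (r a : ℕ) (hr : 3 ≤ r) (ha : a ≤ r - 2)
    (w t : ℝ) (ht : t ≠ 0) :
    deriv (fun s : ℝ => deriv (fun s' : ℝ => lucasU w s' (a + 1)) s) t
      + (2 / r) * deriv (fun s : ℝ => lucasU w s (a + 1)) t
          * deriv (fun s : ℝ => lucasV w s r) t
      + (1 / r) * lucasU w t (a + 1)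
          * deriv (fun s : ℝ => deriv (fun s' : ℝ => lucasV w s' r) s) t
      + (1 / (r : ℝ) ^ 2) * lucasU w t (a + 1)
          * (deriv (fun s : ℝ => lucasV w s r) t) ^ 2
      - t ^ (r - 2) * lucasU w t (a + 1)
      - ((a : ℝ) / t) * deriv (fun s : ℝ => lucasU w s (a + 1)) t
      - ((a : ℝ) / (t * r)) * lucasU w t (a + 1) * deriv (fun s : ℝ => lucasV w s r) t
    = deriv (fun v : ℝ =>
          lucasU v t (a + 1) * lucasU v t (r - 2)
            + (1 / t) * deriv (fun v' : ℝ => lucasU v' t (a + 1)) v) w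
      + (1 / r) * deriv (fun v : ℝ => lucasV v t r) w
          * (lucasU w t (a + 1) * lucasU w t (r - 2)
              + (1 / t) * deriv (fun v' : ℝ => lucasU v' t (a + 1)) w) := by
  obtain ⟨s, rfl⟩ : ∃ s, r = s + 3 := ⟨r - 3, by omega⟩
  rw [show s + 3 - 2 = s + 1 from rfl]
  -- rewrite inner deriv functions
  have hiU : deriv (fun s' : ℝ => lucasU w s' (a + 1)) = fun x => uT w x (a + 1) :=
    funext fun x => (hasDerivAt_U_t w x (a + 1)).deriv
  have hiV : deriv (fun s' : ℝ => lucasV w s' (s + 3)) = fun x => vT w x (s + 3) :=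
    funext fun x => (hasDerivAt_V_t w x (s + 3)).deriv
  have hiUw : deriv (fun v' : ℝ => lucasU v' t (a + 1)) = fun x => uW x t (a + 1) :=
    funext fun x => (hasDerivAt_U_w x t (a + 1)).deriv
  rw [hiU, hiV, hiUw]
  beta_reduce
  have hA : deriv (fun x : ℝ => uT w x (a + 1)) t = uTT w t (a + 1) :=
    (hasDerivAt_uT_t w t (a + 1)).deriv
  have hB : deriv (fun x : ℝ => lucasU w x (a + 1)) t = uT w t (a + 1) :=
    (hasDerivAt_U_t w t (a + 1)).deriv
  have hC : deriv (fun x : ℝ => lucasV w x (s + 3)) t = vT w t (s + 3) :=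
    (hasDerivAt_V_t w t (s + 3)).deriv
  have hD : deriv (fun x : ℝ => vT w x (s + 3)) t = vTT w t (s + 3) :=
    (hasDerivAt_vT_t w t (s + 3)).deriv
  have hE : deriv (fun v : ℝ => lucasV v t (s + 3)) w = vW w t (s + 3) :=
    (hasDerivAt_V_w w t (s + 3)).deriv
  have hF : deriv (fun v : ℝ =>
        lucasU v t (a + 1) * lucasU v t (s + 1) + 1 / t * uW v t (a + 1)) w
      = uW w t (a + 1) * lucasU w t (s + 1) + lucasU w t (a + 1) * uW w t (s + 1)
        + 1 / t * uWW w t (a + 1) :=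
    (((hasDerivAt_U_w w t (a + 1)).mul (hasDerivAt_U_w w t (s + 1))).add
      ((hasDerivAt_uW_w w t (a + 1)).const_mul (1 / t))).deriv
  rw [hA, hD, hE, hF]
  -- the V-derivative identities
  have hvT : vT w t (s + 3) = -((s : ℝ) + 3) * lucasU w t (s + 2) := by
    have h := vT_eq w t (s + 2)
    push_cast at h ⊢
    linear_combination h
  have hvTT : vTT w t (s + 3) = -((s : ℝ) + 3) * uT w t (s + 2) := by
    have h := vTT_eq w t (s + 2)
    push_cast at h ⊢
    linear_combination h
  have hvW : vW w t (s + 3) = ((s : ℝ) + 3) * lucasU w t (s + 3) := by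
    have h := vW_eq w t (s + 3)
    push_cast at h ⊢
    linear_combination h
  rw [hvT, hvTT, hvW]
  have key := KEY w t s a
  have hR : ((s : ℝ) + 3) ≠ 0 := by positivity
  have hR3 : ((s : ℕ) + 3 : ℝ) ≠ 0 := by positivity
  push_cast
  field_simp
  linear_combination key
end
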